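/- Let H and K be complex Hilbert spaces, let Φ : B(H) → B(K) be a strictly positive linear map with Φ(I) ≤ I, and let A, B ∈ B(H) satisfy 0 < b₁I ≤ A ≤ a₁I and 0 < b₂I ≤ B ≤ a₂I. Let f : (0,∞) → (0,∞) be an operator monotone function with f(1) = 1 and σ the associated operator mean. Then Φ(A)^{1/2} Φ(|A^{−1/2}(A σ B)|²) Φ(A)^{1/2} − |Φ(A)^{−1/2} Φ(A σ B) Φ(A)^{1/2}|² ≤ (a₁²/4)(f(a₂b₁⁻¹) − f(b₂a₁⁻¹))² I. -/

import Mathlib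

open scoped InnerProductSpace

noncomputable section

/-- The real power `A ^ r` of a (positive) operator, via the continuous functional calculus. -/
noncomputable def opPow {H : Type} [NormedAddCommGroup H] [InnerProductSpace ℂ H]
    [CompleteSpace H] (A : H →L[ℂ] H) (r : ℝ) : H →L[ℂ] H :=
  cfc (fun t : ℝ => t ^ r) A

/-- The operator mean `A σ B = A^{1/2} f(A^{-1/2} B A^{-1/2}) A^{1/2}` associated with the
representing function `f`. -/
noncomputable def opMean {H : Type} [NormedAddCommGroup H] [InnerProductSpace ℂ H]
    [CompleteSpace H] (f : ℝ → ℝ) (A B : H →L[ℂ] H) : H →L[ℂ] H :=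
  opPow A (1/2) * cfc f (opPow A (-(1/2)) * B * opPow A (-(1/2))) * opPow A (1/2)

/-- The weighted geometric mean `A #_α B = A^{1/2} (A^{-1/2} B A^{-1/2})^α A^{1/2}`. -/
noncomputable def geoMean {H : Type} [NormedAddCommGroup H] [InnerProductSpace ℂ H]
    [CompleteSpace H] (α : ℝ) (A B : H →L[ℂ] H) : H →L[ℂ] H :=
  opMean (fun t : ℝ => t ^ α) A B

/-- `f : (0,∞) → (0,∞)` is operator monotone: for all positive invertible operators `X ≤ Y`
(on any complex Hilbert space), `f(X) ≤ f(Y)` in the Loewner order. -/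
def IsOperatorMonotone (f : ℝ → ℝ) : Prop :=
  ∀ (H : Type) [NormedAddCommGroup H] [InnerProductSpace ℂ H] [CompleteSpace H]
    (X Y : H →L[ℂ] H), 0 ≤ X → IsUnit X → 0 ≤ Y → IsUnit Y → X ≤ Y →
      cfc f X ≤ cfc f Y

section OzekiAuxSection

set_option synthInstance.maxHeartbeats 1000000
set_option maxHeartbeats 1000000

namespace OzekiAux

variable {H : Type} [NormedAddCommGroup H] [InnerProductSpace ℂ H] [CompleteSpace H]

variable {a : H →L[ℂ] H}

lemma one_nonneg : (0 : H →L[ℂ] H) ≤ 1 := by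
  simpa using star_mul_self_nonneg (1 : H →L[ℂ] H)

lemma smul_one_nonneg {r : ℝ} (hr : 0 ≤ r) : (0 : H →L[ℂ] H) ≤ r • 1 :=
  smul_nonneg hr one_nonneg

lemma isUnit_smul_one {r : ℝ} (hr : r ≠ 0) : IsUnit (r • (1 : H →L[ℂ] H)) :=
  ⟨⟨r • 1, r⁻¹ • 1, by simp [smul_smul, mul_smul_comm, hr],
    by simp [smul_smul, mul_smul_comm, hr]⟩, rfl⟩

lemma spec_pos (ha : 0 ≤ a) (hu : IsUnit a) : ∀ x ∈ spectrum ℝ a, 0 < x := fun x hx =>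
  lt_of_le_of_ne (spectrum_nonneg_of_nonneg ha hx)
    (fun h => spectrum.zero_notMem ℝ hu (h ▸ hx))

lemma rpow_contOn (ha : 0 ≤ a) (hu : IsUnit a) (r : ℝ) :
    ContinuousOn (fun t : ℝ => t ^ r) (spectrum ℝ a) := fun t ht =>
  (Real.continuousAt_rpow_const t r (Or.inl (ne_of_gt (spec_pos ha hu t ht)))).continuousWithinAt

lemma oP_nonneg (ha : 0 ≤ a) (r : ℝ) : 0 ≤ opPow a r :=
  cfc_nonneg fun x hx => Real.rpow_nonneg (spectrum_nonneg_of_nonneg ha hx) r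

lemma oP_sa (a : H →L[ℂ] H) (r : ℝ) : IsSelfAdjoint (opPow a r) := cfc_predicate _ a

lemma oP_add (ha : 0 ≤ a) (hu : IsUnit a) (r s : ℝ) :
    opPow a r * opPow a s = opPow a (r + s) := by
  rw [opPow, opPow, opPow, ← cfc_mul _ _ a (rpow_contOn ha hu r) (rpow_contOn ha hu s)]
  exact cfc_congr fun x hx => (Real.rpow_add (spec_pos ha hu x hx) r s).symm

lemma oP_one (ha : 0 ≤ a) : opPow a 1 = a := by
  rw [opPow]
  calc cfc (fun t : ℝ => t ^ (1:ℝ)) a = cfc (id : ℝ → ℝ) a :=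
        cfc_congr fun x _ => Real.rpow_one x
    _ = a := cfc_id ℝ a

lemma oP_zero (ha : 0 ≤ a) (hu : IsUnit a) : opPow a 0 = 1 := by
  rw [opPow]
  calc cfc (fun t : ℝ => t ^ (0:ℝ)) a = cfc (fun _ : ℝ => (1:ℝ)) a :=
        cfc_congr fun x _ => Real.rpow_zero x
    _ = 1 := cfc_const_one ℝ a

lemma half_mul_half (ha : 0 ≤ a) (hu : IsUnit a) :
    opPow a (1/2) * opPow a (1/2) = a := by
  rw [oP_add ha hu]; norm_num [oP_one ha]

lemma half_mul_neg_half (ha : 0 ≤ a) (hu : IsUnit a) :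
    opPow a (1/2) * opPow a (-(1/2)) = 1 := by
  rw [oP_add ha hu]; norm_num [oP_zero ha hu]

lemma neg_half_mul_half (ha : 0 ≤ a) (hu : IsUnit a) :
    opPow a (-(1/2)) * opPow a (1/2) = 1 := by
  rw [oP_add ha hu]; norm_num [oP_zero ha hu]

lemma neg_half_sq (ha : 0 ≤ a) (hu : IsUnit a) :
    opPow a (-(1/2)) * opPow a (-(1/2)) = opPow a (-1) := by
  rw [oP_add ha hu]; norm_num

lemma spec_le (hsa : IsSelfAdjoint a) {r : ℝ} (h : a ≤ r • (1 : H →L[ℂ] H)) :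
    ∀ x ∈ spectrum ℝ a, x ≤ r := by
  rw [← Algebra.algebraMap_eq_smul_one] at h
  exact (le_algebraMap_iff_spectrum_le hsa).mp h

lemma le_spec (hsa : IsSelfAdjoint a) {r : ℝ} (h : r • (1 : H →L[ℂ] H) ≤ a) :
    ∀ x ∈ spectrum ℝ a, r ≤ x := by
  rw [← Algebra.algebraMap_eq_smul_one] at h
  exact (algebraMap_le_iff_le_spectrum hsa).mp h

lemma le_smul_one (hsa : IsSelfAdjoint a) {r : ℝ} (h : ∀ x ∈ spectrum ℝ a, x ≤ r) :
    a ≤ r • (1 : H →L[ℂ] H) := by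
  rw [← Algebra.algebraMap_eq_smul_one]
  exact le_algebraMap_of_spectrum_le h

lemma smul_one_le (hsa : IsSelfAdjoint a) {r : ℝ} (h : ∀ x ∈ spectrum ℝ a, r ≤ x) :
    r • (1 : H →L[ℂ] H) ≤ a := by
  rw [← Algebra.algebraMap_eq_smul_one]
  exact algebraMap_le_of_le_spectrum h

lemma isUnit_of_smul_one_le {r : ℝ} (hr : 0 < r) (hsa : IsSelfAdjoint a)
    (h : r • (1 : H →L[ℂ] H) ≤ a) : IsUnit a := by
  rw [← spectrum.zero_notMem_iff ℝ]
  intro h0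
  exact absurd (le_spec hsa h 0 h0) (by linarith)

lemma sq_le_smul_one (ha : 0 ≤ a) {r : ℝ} (h : a ≤ r • (1 : H →L[ℂ] H)) :
    a * a ≤ (r ^ 2) • (1 : H →L[ℂ] H) := by
  have hsa := ha.isSelfAdjoint
  have hspec := spec_le hsa h
  have hc : ContinuousOn (fun t : ℝ => t) (spectrum ℝ a) := continuous_id.continuousOn
  have hmm : cfc (fun t : ℝ => t * t) a = a * a := by
    rw [cfc_mul _ _ a hc hc, cfc_id' ℝ a]
  rw [← hmm]
  apply le_smul_one (cfc_predicate _ a)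
  intro x hx
  rw [cfc_map_spectrum (fun t : ℝ => t * t) a hsa (hc.mul hc)] at hx
  obtain ⟨t, ht, rfl⟩ := hx
  have h1 := spectrum_nonneg_of_nonneg ha ht
  have h2 := hspec t ht
  simp only []
  nlinarith [mul_nonneg (by linarith : (0:ℝ) ≤ r - t) (by linarith : (0:ℝ) ≤ r + t)]

/-- `X² ≤ (M+m)X - mM` when `m ≤ X ≤ M`. -/
lemma quad {X : H →L[ℂ] H} (hsa : IsSelfAdjoint X) {m M : ℝ}
    (hm : m • (1 : H →L[ℂ] H) ≤ X) (hM : X ≤ M • (1 : H →L[ℂ] H)) :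
    X * X ≤ (M + m) • X - (m * M) • 1 := by
  have hc : ContinuousOn (fun t : ℝ => t) (spectrum ℝ X) := continuous_id.continuousOn
  have h1 : cfc (fun t : ℝ => t * t) X = X * X := by
    rw [cfc_mul _ _ X hc hc, cfc_id' ℝ X]
  have h2 : cfc (fun t : ℝ => (M + m) * t - m * M) X = (M + m) • X - (m * M) • 1 := by
    rw [cfc_sub _ _ X (by fun_prop) (by fun_prop), cfc_const_mul_id _ X hsa,
      cfc_const _ X hsa, Algebra.algebraMap_eq_smul_one]
  rw [← h1, ← h2]
  apply cfc_mono ?_ (hc.mul hc)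
    ((continuous_const.mul continuous_id).sub continuous_const).continuousOn
  intro t ht
  have hmt := le_spec hsa hm t ht
  have htM := spec_le hsa hM t ht
  simp only [Pi.sub_apply, Pi.mul_apply, id_eq]
  nlinarith [mul_nonneg (by linarith : (0:ℝ) ≤ M - t) (by linarith : (0:ℝ) ≤ t - m)]

/-- `(M+m)S - mM - S² ≤ ((M-m)/2)²`. -/
lemma sLemma {S : H →L[ℂ] H} (hsa : IsSelfAdjoint S) (m M : ℝ) :
    (M + m) • S - (m * M) • 1 - S * S ≤ ((M - m) ^ 2 / 4) • 1 := by
  rw [← sub_nonneg]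
  have key : ((M - m) ^ 2 / 4) • (1 : H →L[ℂ] H) - ((M + m) • S - (m * M) • 1 - S * S) =
      star (S - ((M + m) / 2) • 1) * (S - ((M + m) / 2) • 1) := by
    have hstar : star (S - ((M + m) / 2) • (1 : H →L[ℂ] H)) = S - ((M + m) / 2) • 1 := by
      rw [star_sub, hsa.star_eq]
      congr 1
      rw [star_smul, star_one]
      norm_num
    rw [hstar]
    have expand : (S - ((M + m) / 2) • (1 : H →L[ℂ] H)) * (S - ((M + m) / 2) • 1) =
        S * S - ((M + m) / 2) • S - ((M + m) / 2) • S + (((M + m) / 2) * ((M + m) / 2)) • 1 := by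
      simp [mul_sub, sub_mul, mul_smul_comm, smul_mul_assoc, smul_smul]
      module
    rw [expand]
    have hcoef : (M - m) ^ 2 / 4 + m * M = ((M + m) / 2) * ((M + m) / 2) := by ring
    have hcoef2 : (M + m : ℝ) = (M + m) / 2 + (M + m) / 2 := by ring
    rw [hcoef2]
    rw [add_smul]
    module
  rw [key]
  exact star_mul_self_nonneg _

lemma conj_sub_smul (Z W V : H →L[ℂ] H) (c d : ℝ) :
    Z * (c • W - d • V) * Z = c • (Z * W * Z) - d • (Z * V * Z) := by
  simp [mul_sub, sub_mul, mul_smul_comm, smul_mul_assoc]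

end OzekiAux

end OzekiAuxSection

open OzekiAux

set_option synthInstance.maxHeartbeats 1000000
set_option maxHeartbeats 4000000

/-- **Generalized Ozeki–Izumino–Mori–Seo type inequality (Theorem 3.10).** -/
theorem stmt_11 {H K : Type} [NormedAddCommGroup H] [InnerProductSpace ℂ H] [CompleteSpace H]
    [NormedAddCommGroup K] [InnerProductSpace ℂ K] [CompleteSpace K]
    (Φ : (H →L[ℂ] H) →ₗ[ℂ] (K →L[ℂ] K))
    (hΦ : ∀ X : H →L[ℂ] H, 0 ≤ X → 0 ≤ Φ X)
    (hΦu : ∀ X : H →L[ℂ] H, 0 ≤ X → IsUnit X → IsUnit (Φ X))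
    (hΦ1 : Φ 1 ≤ 1)
    (A B : H →L[ℂ] H) (a₁ b₁ a₂ b₂ : ℝ)
    (hb₁ : 0 < b₁) (hb₂ : 0 < b₂)
    (hA₁ : b₁ • (1 : H →L[ℂ] H) ≤ A) (hA₂ : A ≤ a₁ • (1 : H →L[ℂ] H))
    (hB₁ : b₂ • (1 : H →L[ℂ] H) ≤ B) (hB₂ : B ≤ a₂ • (1 : H →L[ℂ] H))
    (f : ℝ → ℝ) (hf_pos : ∀ x : ℝ, 0 < x → 0 < f x) (hf_one : f 1 = 1)
    (hf_mono : IsOperatorMonotone f) :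
    opPow (Φ A) (1/2) *
          Φ (star (opPow A (-(1/2)) * opMean f A B) * (opPow A (-(1/2)) * opMean f A B)) *
          opPow (Φ A) (1/2) -
        star (opPow (Φ A) (-(1/2)) * Φ (opMean f A B) * opPow (Φ A) (1/2)) *
          (opPow (Φ A) (-(1/2)) * Φ (opMean f A B) * opPow (Φ A) (1/2)) ≤
      (a₁ ^ 2 / 4 * (f (a₂ * b₁⁻¹) - f (b₂ * a₁⁻¹)) ^ 2) • (1 : K →L[ℂ] K) := by
  classical
  have hRHScoef : (0:ℝ) ≤ a₁ ^ 2 / 4 * (f (a₂ * b₁⁻¹) - f (b₂ * a₁⁻¹)) ^ 2 := by positivity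
  have hRHS0 : (0 : K →L[ℂ] K) ≤ (a₁ ^ 2 / 4 * (f (a₂ * b₁⁻¹) - f (b₂ * a₁⁻¹)) ^ 2) • 1 :=
    smul_nonneg hRHScoef one_nonneg
  rcases subsingleton_or_nontrivial H with hH | hH
  · haveI : Subsingleton (H →L[ℂ] H) :=
      ⟨fun x y => ContinuousLinearMap.ext fun v => Subsingleton.elim _ _⟩
    have hz : ∀ X : H →L[ℂ] H, Φ X = 0 := fun X => by
      rw [Subsingleton.elim X (0 : H →L[ℂ] H), map_zero]
    simp only [hz]
    simpa using hRHS0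
  -- Main case: `H` nontrivial.
  have hA0 : (0 : H →L[ℂ] H) ≤ A := le_trans (smul_one_nonneg hb₁.le) hA₁
  have hAsa : IsSelfAdjoint A := hA0.isSelfAdjoint
  have hAu : IsUnit A := isUnit_of_smul_one_le hb₁ hAsa hA₁
  have hB0 : (0 : H →L[ℂ] H) ≤ B := le_trans (smul_one_nonneg hb₂.le) hB₁
  have hBsa : IsSelfAdjoint B := hB0.isSelfAdjoint
  have hBu : IsUnit B := isUnit_of_smul_one_le hb₂ hBsa hB₁
  obtain ⟨t₀, ht₀⟩ := CFC.spectrum_nonempty (R := ℝ) A hAsa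
  have ha₁ : 0 < a₁ :=
    lt_of_lt_of_le hb₁ (le_trans (le_spec hAsa hA₁ t₀ ht₀) (spec_le hAsa hA₂ t₀ ht₀))
  obtain ⟨s₀, hs₀⟩ := CFC.spectrum_nonempty (R := ℝ) B hBsa
  have ha₂ : 0 < a₂ :=
    lt_of_lt_of_le hb₂ (le_trans (le_spec hBsa hB₁ s₀ hs₀) (spec_le hBsa hB₂ s₀ hs₀))
  set m := f (b₂ * a₁⁻¹) with hm_def
  set M := f (a₂ * b₁⁻¹) with hM_def
  set P := opPow A (1/2) with hP_def
  set Q := opPow A (-(1/2)) with hQ_def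
  have hPsa : IsSelfAdjoint P := oP_sa A _
  have hQsa : IsSelfAdjoint Q := oP_sa A _
  have hPQ : P * Q = 1 := half_mul_neg_half hA0 hAu
  have hQP : Q * P = 1 := neg_half_mul_half hA0 hAu
  have hPP : P * P = A := half_mul_half hA0 hAu
  have hQQ : Q * Q = opPow A (-1) := neg_half_sq hA0 hAu
  set At := Q * B * Q with hAt_def
  set X := cfc f At with hX_def
  have hC : opMean f A B = P * X * P := rfl
  -- K-side setup
  set D := Φ A with hD_def
  have hD0 : 0 ≤ D := hΦ A hA0
  have hDu : IsUnit D := hΦu A hA0 hAu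
  have hDsa : IsSelfAdjoint D := hD0.isSelfAdjoint
  set E := opPow D (1/2) with hE_def
  set F := opPow D (-(1/2)) with hF_def
  have hEsa : IsSelfAdjoint E := oP_sa D _
  have hFsa : IsSelfAdjoint F := oP_sa D _
  have hEF : E * F = 1 := half_mul_neg_half hD0 hDu
  have hFE : F * E = 1 := neg_half_mul_half hD0 hDu
  have hEE : E * E = D := half_mul_half hD0 hDu
  have hEFx : ∀ x : K →L[ℂ] K, E * (F * x) = x := fun x => by rw [← mul_assoc, hEF, one_mul]
  have hFEx : ∀ x : K →L[ℂ] K, F * (E * x) = x := fun x => by rw [← mul_assoc, hFE, one_mul]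
  have hQPx : ∀ x : H →L[ℂ] H, Q * (P * x) = x := fun x => by rw [← mul_assoc, hQP, one_mul]
  by_cases hcont : ContinuousOn f (spectrum ℝ At)
  case neg =>
    have hX0 : X = 0 := cfc_apply_of_not_continuousOn _ hcont
    rw [hC, hX0]
    simp only [mul_zero, zero_mul, star_zero, map_zero]
    simpa using hRHS0
  case pos =>
  have hQu : IsUnit Q := ⟨⟨Q, P, hQP, hPQ⟩, rfl⟩
  have hAt0 : 0 ≤ At := by
    have := star_left_conjugate_nonneg hB0 Q
    rwa [hQsa.star_eq] at this
  have hAtu : IsUnit At := (hQu.mul hBu).mul hQu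
  have hAtsa : IsSelfAdjoint At := hAt0.isSelfAdjoint
  -- bounds on A⁻¹
  have hinv_lo : a₁⁻¹ • (1 : H →L[ℂ] H) ≤ opPow A (-1) := by
    rw [← Algebra.algebraMap_eq_smul_one]
    apply algebraMap_le_cfc _ _ _ ?_ (rpow_contOn hA0 hAu _) hAsa
    intro x hx
    have hx0 := spec_pos hA0 hAu x hx
    have hxa := spec_le hAsa hA₂ x hx
    rw [Real.rpow_neg_one]
    exact inv_anti₀ hx0 hxa
  have hinv_hi : opPow A (-1) ≤ b₁⁻¹ • (1 : H →L[ℂ] H) := by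
    rw [← Algebra.algebraMap_eq_smul_one]
    apply cfc_le_algebraMap _ _ _ ?_ (rpow_contOn hA0 hAu _) hAsa
    intro x hx
    have hxb := le_spec hAsa hA₁ x hx
    rw [Real.rpow_neg_one]
    exact inv_anti₀ hb₁ hxb
  -- bounds on At
  have hAtlo : (b₂ * a₁⁻¹) • (1 : H →L[ℂ] H) ≤ At := by
    have h1 : Q * (b₂ • (1 : H →L[ℂ] H)) * Q ≤ Q * B * Q := by
      have := star_left_conjugate_le_conjugate hB₁ Q
      rwa [hQsa.star_eq] at this
    have h2 : Q * (b₂ • (1 : H →L[ℂ] H)) * Q = b₂ • (Q * Q) := by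
      simp [mul_smul_comm, smul_mul_assoc]
    calc (b₂ * a₁⁻¹) • (1 : H →L[ℂ] H) = b₂ • (a₁⁻¹ • (1 : H →L[ℂ] H)) := by rw [smul_smul]
      _ ≤ b₂ • (Q * Q) := by
          refine smul_le_smul_of_nonneg_left ?_ hb₂.le
          rw [hQQ]; exact hinv_lo
      _ = Q * (b₂ • (1 : H →L[ℂ] H)) * Q := h2.symm
      _ ≤ At := h1
  have hAthi : At ≤ (a₂ * b₁⁻¹) • (1 : H →L[ℂ] H) := by
    have h1 : Q * B * Q ≤ Q * (a₂ • (1 : H →L[ℂ] H)) * Q := by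
      have := star_left_conjugate_le_conjugate hB₂ Q
      rwa [hQsa.star_eq] at this
    have h2 : Q * (a₂ • (1 : H →L[ℂ] H)) * Q = a₂ • (Q * Q) := by
      simp [mul_smul_comm, smul_mul_assoc]
    calc At ≤ Q * (a₂ • (1 : H →L[ℂ] H)) * Q := h1
      _ = a₂ • (Q * Q) := h2
      _ ≤ a₂ • (b₁⁻¹ • (1 : H →L[ℂ] H)) := by
          refine smul_le_smul_of_nonneg_left ?_ ha₂.le
          rw [hQQ]; exact hinv_hi
      _ = (a₂ * b₁⁻¹) • (1 : H →L[ℂ] H) := by rw [smul_smul]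
  -- bounds on X = f(At)
  have hba_pos : 0 < b₂ * a₁⁻¹ := mul_pos hb₂ (inv_pos.mpr ha₁)
  have hab_pos : 0 < a₂ * b₁⁻¹ := mul_pos ha₂ (inv_pos.mpr hb₁)
  have hXlo : m • (1 : H →L[ℂ] H) ≤ X := by
    have h := hf_mono H ((b₂ * a₁⁻¹) • 1) At (smul_one_nonneg hba_pos.le)
      (isUnit_smul_one hba_pos.ne') hAt0 hAtu hAtlo
    rwa [← Algebra.algebraMap_eq_smul_one, cfc_algebraMap,
      Algebra.algebraMap_eq_smul_one] at h
  have hXhi : X ≤ M • (1 : H →L[ℂ] H) := by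
    have h := hf_mono H At ((a₂ * b₁⁻¹) • 1) hAt0 hAtu (smul_one_nonneg hab_pos.le)
      (isUnit_smul_one hab_pos.ne') hAthi
    rwa [← Algebra.algebraMap_eq_smul_one, cfc_algebraMap,
      Algebra.algebraMap_eq_smul_one] at h
  have hXsa : IsSelfAdjoint X := cfc_predicate _ At
  -- Step A : the first argument of Φ equals P (X*X) P
  have hG : star (Q * opMean f A B) * (Q * opMean f A B) = P * (X * X) * P := by
    rw [hC]
    have h1 : Q * (P * X * P) = X * P := by rw [mul_assoc P X P, hQPx]
    rw [h1, star_mul, hPsa.star_eq, hXsa.star_eq]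
    simp only [mul_assoc]
  -- Step B
  have hstepB : P * (X * X) * P ≤ (M + m) • opMean f A B - (m * M) • A := by
    have h1 := star_left_conjugate_le_conjugate (quad hXsa hXlo hXhi) P
    rw [hPsa.star_eq] at h1
    refine le_trans h1 (le_of_eq ?_)
    rw [conj_sub_smul P X 1 (M + m) (m * M), hC, mul_one, hPP]
  -- Φ monotone
  have hΦmono : ∀ {U V : H →L[ℂ] H}, U ≤ V → Φ U ≤ Φ V := fun {U V} h => by
    have h2 := hΦ _ (sub_nonneg.mpr h)
    rw [map_sub] at h2
    exact sub_nonneg.mp h2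
  have hstepC : Φ (star (Q * opMean f A B) * (Q * opMean f A B)) ≤
      (M + m) • Φ (opMean f A B) - (m * M) • D := by
    rw [hG]
    have h2 := hΦmono hstepB
    rwa [map_sub, Φ.map_smul_of_tower, Φ.map_smul_of_tower] at h2
  set ΦC := Φ (opMean f A B) with hΦC_def
  -- Φ C is self-adjoint
  have hCm : m • A ≤ opMean f A B := by
    have h1 := star_left_conjugate_le_conjugate hXlo P
    rw [hPsa.star_eq] at h1
    calc m • A = P * (m • (1 : H →L[ℂ] H)) * P := by
          simp [mul_smul_comm, smul_mul_assoc, hPP]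
      _ ≤ P * X * P := h1
      _ = opMean f A B := hC.symm
  have hΦCsa : IsSelfAdjoint ΦC := by
    have h0 : (0:K →L[ℂ] K) ≤ Φ (opMean f A B - m • A) := hΦ _ (sub_nonneg.mpr hCm)
    have hsa0 : IsSelfAdjoint (Φ (opMean f A B - m • A)) := h0.isSelfAdjoint
    have heq : ΦC = Φ (opMean f A B - m • A) + m • D := by
      rw [map_sub, Φ.map_smul_of_tower, hΦC_def, hD_def]
      abel
    rw [heq]
    refine hsa0.add ?_
    rw [IsSelfAdjoint, star_smul, star_trivial, hDsa.star_eq]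
  set S := F * ΦC * F with hS_def
  have hSsa : IsSelfAdjoint S := by
    rw [hS_def, IsSelfAdjoint]
    simp only [star_mul, hFsa.star_eq, hΦCsa.star_eq, mul_assoc]
  have hΦCE : ΦC = E * S * E := by
    rw [hS_def]
    simp only [mul_assoc]
    rw [hFE, mul_one, hEFx]
  have hECE : E * ΦC * E = D * S * D := by
    rw [hΦCE, ← hEE]
    simp only [mul_assoc]
  have hEDE : E * D * E = D * D := by
    rw [← hEE]
    simp only [mul_assoc]
  -- term2
  have hterm2 : star (F * ΦC * E) * (F * ΦC * E) = D * (S * S) * D := by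
    rw [← hEE, hΦCE]
    simp only [star_mul, hEsa.star_eq, hFsa.star_eq, hSsa.star_eq, mul_assoc, hEFx, hFEx]
  -- term1
  have hterm1 : E * Φ (star (Q * opMean f A B) * (Q * opMean f A B)) * E ≤
      (M + m) • (D * S * D) - (m * M) • (D * D) := by
    have h1 := star_left_conjugate_le_conjugate hstepC E
    rw [hEsa.star_eq] at h1
    refine le_trans h1 (le_of_eq ?_)
    rw [conj_sub_smul E ΦC D (M + m) (m * M), hECE, hEDE]
  -- combine
  have hmain : E * Φ (star (Q * opMean f A B) * (Q * opMean f A B)) * E -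
      star (F * ΦC * E) * (F * ΦC * E) ≤
      D * ((M + m) • S - (m * M) • 1 - S * S) * D := by
    rw [hterm2]
    have hexp : D * ((M + m) • S - (m * M) • 1 - S * S) * D =
        ((M + m) • (D * S * D) - (m * M) • (D * D)) - D * (S * S) * D := by
      simp [mul_sub, sub_mul, mul_smul_comm, smul_mul_assoc]
    rw [hexp]
    exact sub_le_sub_right hterm1 _
  have hfinal1 : D * ((M + m) • S - (m * M) • 1 - S * S) * D ≤
      ((M - m) ^ 2 / 4) • (D * D) := by
    have h1 := star_left_conjugate_le_conjugate (sLemma hSsa m M) D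
    rw [hDsa.star_eq] at h1
    refine le_trans h1 (le_of_eq ?_)
    simp [mul_smul_comm, smul_mul_assoc]
  have hDa₁ : D ≤ a₁ • (1 : K →L[ℂ] K) := by
    have h1 : Φ A ≤ Φ (a₁ • (1 : H →L[ℂ] H)) := hΦmono hA₂
    rw [Φ.map_smul_of_tower] at h1
    calc D ≤ a₁ • Φ 1 := h1
      _ ≤ a₁ • (1 : K →L[ℂ] K) := smul_le_smul_of_nonneg_left hΦ1 ha₁.le
  have hDDle : D * D ≤ (a₁ ^ 2) • (1 : K →L[ℂ] K) := sq_le_smul_one hD0 hDa₁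
  have hfinal2 : ((M - m) ^ 2 / 4) • (D * D) ≤
      (a₁ ^ 2 / 4 * (M - m) ^ 2) • (1 : K →L[ℂ] K) := by
    calc ((M - m) ^ 2 / 4) • (D * D) ≤ ((M - m) ^ 2 / 4) • ((a₁ ^ 2) • (1 : K →L[ℂ] K)) :=
          smul_le_smul_of_nonneg_left hDDle (by positivity)
      _ = (a₁ ^ 2 / 4 * (M - m) ^ 2) • (1 : K →L[ℂ] K) := by
          rw [smul_smul]; congr 1; ring
  exact le_trans hmain (le_trans hfinal1 hfinal2)
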